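/- arXiv:1507.08490 — 2 statements merged into one kernel-verified Lean document; each statement's English description precedes it below -/
import Mathlib

section
/- Let Ω ⊆ ℝ^d be open, bounded and convex, and let v : ℝ^d → ℝ be twice continuously differentiable on an open neighborhood of the closure of Ω and convex on Ω. For each h > 0 let M_h be a map assigning to the restriction r_h(v) of v to the lattice hℤ^d a real-valued function M_h[r_h v] on Ω_h = Ω ∩ hℤ^d, and assume the family (M_h) is consistent at v: for every sequence h_k → 0⁺ and points x_{h_k} ∈ Ω_{h_k} with x_{h_k} → x ∈ Ω, one has M_{h_k}[r_{h_k} v](x_{h_k}) → det D²v(x). Then for every Borel set B ⊆ Ω whose closure is a compact subset of Ω and whose topological boundary has Lebesgue measure zero, h^d ∑_{x ∈ B ∩ Ω_h} M_h[r_h v](x) converges to ∫_B det D²v(x) dx as h → 0⁺; that is, the discrete measures h^d M_h[r_h v] converge weakly to the Monge–Ampère measure det D²v dx of v. -/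
open Filter MeasureTheory Metric Set ENNReal Topology

/-- The scaled lattice hℤ^d = { m h : m ∈ ℤ^d } ⊆ ℝ^d. -/
def latticeSet (d : ℕ) (h : ℝ) : Set (Fin d → ℝ) :=
  {x | ∃ m : Fin d → ℤ, x = fun i => (m i : ℝ) * h}

/-- The determinant of the Hessian matrix D²v(x) of v at x. -/
noncomputable def hessDet (d : ℕ) (v : (Fin d → ℝ) → ℝ) (x : Fin d → ℝ) : ℝ :=
  (Matrix.of fun i j : Fin d =>
    iteratedFDeriv ℝ 2 v x ![Pi.single i 1, Pi.single j 1]).det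

namespace MA

variable {d : ℕ}


variable {d : ℕ}

/-- half-open cube with corner x and side h -/
def cube (x : Fin d → ℝ) (h : ℝ) : Set (Fin d → ℝ) :=
  Set.pi Set.univ fun i => Set.Ico (x i) (x i + h)

lemma cube_measurable (x : Fin d → ℝ) (h : ℝ) : MeasurableSet (cube x h) :=
  MeasurableSet.univ_pi fun _ => measurableSet_Ico

lemma cube_volume (x : Fin d → ℝ) {h : ℝ} (hh : 0 ≤ h) :
    volume (cube x h) = ENNReal.ofReal (h ^ d) := by
  rw [cube, volume_pi_pi]
  simp [Real.volume_Ico, ← ENNReal.ofReal_pow hh]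

lemma dist_le_of_mem_cube {x y : Fin d → ℝ} {h : ℝ} (hh : 0 ≤ h) (hy : y ∈ cube x h) :
    dist y x ≤ h := by
  rw [dist_pi_le_iff hh]
  intro i
  have := hy i (Set.mem_univ i)
  rw [Real.dist_eq, abs_le]
  constructor <;> [skip; skip] <;> simp only [Set.mem_Ico] at this <;> linarith [this.1, this.2]

lemma mem_cube_self (x : Fin d → ℝ) {h : ℝ} (hh : 0 < h) : x ∈ cube x h :=
  fun i _ => by simp [Set.mem_Ico, hh]

lemma cube_disjoint {x₁ x₂ : Fin d → ℝ} {h : ℝ} (hh : 0 < h)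
    (h1 : x₁ ∈ latticeSet d h) (h2 : x₂ ∈ latticeSet d h) (hne : x₁ ≠ x₂) :
    Disjoint (cube x₁ h) (cube x₂ h) := by
  obtain ⟨m₁, rfl⟩ := h1
  obtain ⟨m₂, rfl⟩ := h2
  have : ∃ i, m₁ i ≠ m₂ i := by
    by_contra hc
    push_neg at hc
    exact hne (by funext i; rw [hc i])
  obtain ⟨i, hi⟩ := this
  rw [Set.disjoint_left]
  intro y hy1 hy2
  have h1i := hy1 i (Set.mem_univ i)
  have h2i := hy2 i (Set.mem_univ i)
  simp only [Set.mem_Ico] at h1i h2i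
  rcases lt_or_gt_of_ne hi with hlt | hlt
  · have : (m₁ i : ℝ) + 1 ≤ m₂ i := by exact_mod_cast hlt
    nlinarith [h1i.2, h2i.1]
  · have : (m₂ i : ℝ) + 1 ≤ m₁ i := by exact_mod_cast hlt
    nlinarith [h2i.2, h1i.1]

/-- the lattice corner point of the cube containing y -/
lemma exists_lattice_cube_mem (y : Fin d → ℝ) {h : ℝ} (hh : 0 < h) :
    ∃ x ∈ latticeSet d h, y ∈ cube x h := by
  refine ⟨fun i => (⌊y i / h⌋ : ℝ) * h, ⟨fun i => ⌊y i / h⌋, rfl⟩, fun i _ => ?_⟩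
  have h1 : (⌊y i / h⌋ : ℝ) ≤ y i / h := Int.floor_le _
  have h2 : y i / h < ⌊y i / h⌋ + 1 := Int.lt_floor_add_one _
  constructor
  · calc (⌊y i / h⌋ : ℝ) * h ≤ (y i / h) * h := by nlinarith
    _ = y i := by field_simp
  · have : y i = (y i / h) * h := by field_simp
    rw [this]
    nlinarith

lemma lattice_inter_finite {S : Set (Fin d → ℝ)} (hS : Bornology.IsBounded S) {h : ℝ}
    (hh : 0 < h) : (S ∩ latticeSet d h).Finite := by
  obtain ⟨R, hR⟩ := hS.subset_closedBall 0
  set c : ℤ := ⌈R / h⌉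
  have : S ∩ latticeSet d h ⊆
      (fun m : Fin d → ℤ => fun i => (m i : ℝ) * h) '' (Set.pi Set.univ fun _ => Set.Icc (-c) c) := by
    rintro x ⟨hxS, m, rfl⟩
    refine ⟨m, fun i _ => ?_, rfl⟩
    have hx : dist (fun i => (m i : ℝ) * h) (0 : Fin d → ℝ) ≤ R := by
      simpa [Metric.mem_closedBall] using hR hxS
    have hi : |(m i : ℝ) * h| ≤ R := by
      have := dist_le_pi_dist (fun i => (m i : ℝ) * h) (0 : Fin d → ℝ) i
      rw [Real.dist_eq] at this
      simpa using this.trans hx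
    rw [abs_mul, abs_of_pos hh] at hi
    have hmi : |(m i : ℝ)| ≤ R / h := by
      rw [le_div_iff₀ hh]; exact hi
    have hc : R / h ≤ (c : ℝ) := Int.le_ceil _
    have : |(m i : ℝ)| ≤ (c : ℝ) := hmi.trans hc
    rw [abs_le] at this
    constructor
    · exact_mod_cast this.1
    · exact_mod_cast this.2
  exact Set.Finite.subset (Set.Finite.image _ (Set.Finite.pi fun _ => Set.finite_Icc _ _)) this



lemma sum_cube_volume {h : ℝ} (hh : 0 < h) (P : Finset (Fin d → ℝ))
    (hP : ∀ x ∈ P, x ∈ latticeSet d h) :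
    volume (⋃ x ∈ P, cube x h) = P.card * ENNReal.ofReal (h ^ d) := by
  rw [measure_biUnion_finset ?_ fun x _ => cube_measurable x h]
  · simp only [cube_volume _ hh.le, Finset.sum_const, nsmul_eq_mul]
  · intro x hx y hy hne
    exact cube_disjoint hh (hP x hx) (hP y hy) hne

lemma count_bound {B : Set (Fin d → ℝ)} (hBb : Bornology.IsBounded B) {h : ℝ}
    (hh : 0 < h) (hh1 : h ≤ 1) (P : Finset (Fin d → ℝ))
    (hP : ∀ x ∈ P, x ∈ B ∩ latticeSet d h) :
    (h : ℝ) ^ d * P.card ≤ (volume (cthickening 1 B)).toReal := by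
  have hsub : (⋃ x ∈ P, cube x h) ⊆ cthickening 1 B := by
    intro y hy
    simp only [Set.mem_iUnion] at hy
    obtain ⟨x, hx, hyx⟩ := hy
    exact mem_cthickening_of_dist_le y x 1 B (hP x hx).1
      ((dist_le_of_mem_cube hh.le hyx).trans hh1)
  have hvol := sum_cube_volume hh P fun x hx => (hP x hx).2
  have hle : (P.card : ℝ≥0∞) * ENNReal.ofReal (h ^ d) ≤ volume (cthickening 1 B) := by
    rw [← hvol]; exact measure_mono hsub
  have hfin : volume (cthickening 1 B) ≠ ⊤ :=
    (hBb.cthickening.measure_lt_top).ne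
  have := ENNReal.toReal_mono hfin hle
  rw [ENNReal.toReal_mul, ENNReal.toReal_ofReal (by positivity)] at this
  simp only [ENNReal.toReal_natCast] at this
  linarith [this]

/-- the small "boundary collar" set -/
def Gset (B : Set (Fin d → ℝ)) (h : ℝ) : Set (Fin d → ℝ) :=
  (cthickening h B \ B) ∪ (B ∩ cthickening h Bᶜ)

lemma Gset_mono {B : Set (Fin d → ℝ)} {h h' : ℝ} (hle : h ≤ h') : Gset B h ⊆ Gset B h' :=
  Set.union_subset_union (Set.diff_subset_diff_left (cthickening_mono hle B))
    (Set.inter_subset_inter_right _ (cthickening_mono hle Bᶜ))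

lemma Gset_measurable {B : Set (Fin d → ℝ)} (hB : MeasurableSet B) (h : ℝ) :
    MeasurableSet (Gset B h) :=
  ((isClosed_cthickening.measurableSet).diff hB).union
    (hB.inter isClosed_cthickening.measurableSet)

lemma iInter_Gset_subset_frontier {B : Set (Fin d → ℝ)} :
    (⋂ n : ℕ, Gset B (1 / (n + 1))) ⊆ frontier B := by
  intro y hy
  rw [Set.mem_iInter] at hy
  rw [frontier_eq_closure_inter_closure]
  have hmem : ∀ (S : Set (Fin d → ℝ)), (∀ n : ℕ, y ∈ cthickening (1 / (n + 1 : ℝ)) S) →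
      y ∈ closure S := by
    intro S hS
    rw [closure_eq_iInter_cthickening' S (Set.range fun n : ℕ => 1 / (n + 1 : ℝ)) ?_]
    · simp only [Set.mem_iInter]
      rintro δ ⟨n, rfl⟩
      exact hS n
    · intro ε hε
      obtain ⟨n, hn⟩ := exists_nat_one_div_lt hε
      exact ⟨1 / (n + 1 : ℝ), ⟨n, rfl⟩, by positivity, hn.le⟩
  by_cases hyB : y ∈ B
  · refine ⟨subset_closure hyB, hmem Bᶜ fun n => ?_⟩
    rcases hy n with h1 | h2
    · exact absurd hyB h1.2
    · exact h2.2
  · refine ⟨hmem B fun n => ?_, subset_closure hyB⟩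
    rcases hy n with h1 | h2
    · exact h1.1
    · exact absurd h2.1 hyB

lemma Gset_small {B : Set (Fin d → ℝ)} (hB : MeasurableSet B)
    (hBb : Bornology.IsBounded B) (hfr : volume (frontier B) = 0) {ε : ℝ} (hε : 0 < ε) :
    ∃ δ : ℝ, 0 < δ ∧ δ ≤ 1 ∧ ∀ h : ℝ, 0 < h → h < δ → (volume (Gset B h)).toReal < ε := by
  set A : ℕ → Set (Fin d → ℝ) := fun n => Gset B (1 / (n + 1))
  have hanti : Antitone A := by
    intro m n hmn
    apply Gset_mono
    apply one_div_le_one_div_of_le (by positivity)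
    have : (m : ℝ) ≤ n := Nat.cast_le.2 hmn
    linarith
  have hfin : volume (A 0) ≠ ⊤ := by
    have : A 0 ⊆ cthickening 1 B ∪ B := by
      apply Set.union_subset
      · exact fun y hy => Or.inl (by simpa using hy.1)
      · exact fun y hy => Or.inr hy.1
    exact ((measure_mono this).trans_lt
      (measure_union_lt_top hBb.cthickening.measure_lt_top hBb.measure_lt_top)).ne
  have hzero : volume (⋂ n, A n) = 0 :=
    le_antisymm (hfr ▸ measure_mono iInter_Gset_subset_frontier) zero_le
  have htend : Tendsto (fun n => volume (A n)) atTop (𝓝 0) := by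
    have := tendsto_measure_iInter_atTop (μ := volume)
      (fun n => (Gset_measurable hB _).nullMeasurableSet) hanti ⟨0, hfin⟩
    rwa [hzero] at this
  have : ∀ᶠ n in atTop, volume (A n) < ENNReal.ofReal ε :=
    htend.eventually_lt_const (by simp [hε])
  obtain ⟨N, hN⟩ := this.exists
  refine ⟨min (1 / (N + 1)) 1, by positivity, min_le_right _ _, fun h hh hhδ => ?_⟩
  have hsub : Gset B h ⊆ A N :=
    Gset_mono (le_of_lt (lt_of_lt_of_le hhδ (min_le_left _ _)))
  exact ENNReal.toReal_lt_of_lt_ofReal ((measure_mono hsub).trans_lt hN)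



lemma hessDet_continuousOn {U : Set (Fin d → ℝ)} {v : (Fin d → ℝ) → ℝ}
    (hU : IsOpen U) (hv : ContDiffOn ℝ 2 v U) : ContinuousOn (hessDet d v) U := by
  have h1 : ContinuousOn (iteratedFDeriv ℝ 2 v) U := by
    have := hv.continuousOn_iteratedFDerivWithin (m := 2) (by norm_num) hU.uniqueDiffOn
    refine this.congr fun x hx => ?_
    exact (iteratedFDerivWithin_of_isOpen (𝕜 := ℝ) (f := v) 2 hU hx).symm
  have h2 : ∀ (m : Fin 2 → (Fin d → ℝ)),
      ContinuousOn (fun x => iteratedFDeriv ℝ 2 v x m) U := fun m =>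
    (continuous_eval_const m).comp_continuousOn h1
  have hdet : Continuous fun A : Matrix (Fin d) (Fin d) ℝ => A.det :=
    Continuous.matrix_det continuous_id
  exact hdet.comp_continuousOn (continuousOn_pi.2 fun i => continuousOn_pi.2 fun j => h2 _)



lemma unif_consist {Ω B : Set (Fin d → ℝ)} (f : (Fin d → ℝ) → ℝ)
    (hf : ContinuousOn f Ω) (M : ℝ → (Fin d → ℝ) → ℝ)
    (hconsist : ∀ hk : ℕ → ℝ, (∀ k, 0 < hk k) → Tendsto hk atTop (nhds 0) →
      ∀ (xk : ℕ → (Fin d → ℝ)) (x : Fin d → ℝ), x ∈ Ω →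
        (∀ k, xk k ∈ Ω ∩ latticeSet d (hk k)) → Tendsto xk atTop (nhds x) →
        Tendsto (fun k => M (hk k) (xk k)) atTop (nhds (f x)))
    (hBΩ : B ⊆ Ω) (hK : IsCompact (closure B)) (hKΩ : closure B ⊆ Ω)
    {ε : ℝ} (hε : 0 < ε) :
    ∃ δ : ℝ, 0 < δ ∧ ∀ h : ℝ, 0 < h → h < δ →
      ∀ x ∈ B ∩ latticeSet d h, |M h x - f x| ≤ ε := by
  by_contra hcon
  push_neg at hcon
  have H : ∀ k : ℕ, ∃ h : ℝ, ∃ x : Fin d → ℝ, 0 < h ∧ h < 1 / (k + 1) ∧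
      x ∈ B ∩ latticeSet d h ∧ ε < |M h x - f x| := by
    intro k
    obtain ⟨h, hh0, hhlt, x, hx, hgt⟩ := hcon (1 / (k + 1)) (by positivity)
    exact ⟨h, x, hh0, hhlt, hx, hgt⟩
  choose hk xk h1 h2 h3 h4 using H
  have hk0 : Tendsto hk atTop (𝓝 0) := by
    apply squeeze_zero (fun k => (h1 k).le) (fun k => (h2 k).le)
    exact tendsto_one_div_add_atTop_nhds_zero_nat
  obtain ⟨a, haK, φ, hφ, hconv⟩ := hK.tendsto_subseq fun k => subset_closure (h3 k).1
  have haΩ : a ∈ Ω := hKΩ haK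
  have hM : Tendsto (fun k => M (hk (φ k)) (xk (φ k))) atTop (𝓝 (f a)) :=
    hconsist (hk ∘ φ) (fun k => h1 (φ k)) (hk0.comp hφ.tendsto_atTop)
      (xk ∘ φ) a haΩ (fun k => ⟨hBΩ (h3 (φ k)).1, (h3 (φ k)).2⟩) hconv
  have hfx : Tendsto (fun k => f (xk (φ k))) atTop (𝓝 (f a)) := by
    apply (hf a haΩ).tendsto.comp
    rw [tendsto_nhdsWithin_iff]
    exact ⟨hconv, Eventually.of_forall fun k => hBΩ (h3 (φ k)).1⟩
  have hdiff : Tendsto (fun k => |M (hk (φ k)) (xk (φ k)) - f (xk (φ k))|) atTop (𝓝 0) := by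
    have := (hM.sub hfx).abs
    simpa using this
  have hle : ε ≤ 0 := ge_of_tendsto' hdiff fun k => (h4 (φ k)).le
  linarith



set_option maxHeartbeats 1000000 in
lemma riemann_sum_est {B : Set (Fin d → ℝ)} (hB : MeasurableSet B)
    (hBcl : IsCompact (closure B)) (hfr : volume (frontier B) = 0)
    (f : (Fin d → ℝ) → ℝ) (hf : ContinuousOn f (closure B)) {ε : ℝ} (hε : 0 < ε) :
    ∃ δ : ℝ, 0 < δ ∧ ∀ h : ℝ, 0 < h → h < δ →
      |h ^ d * ∑ᶠ x ∈ B ∩ latticeSet d h, f x - ∫ x in B, f x| < ε := by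
  have hBb : Bornology.IsBounded B := hBcl.isBounded.subset subset_closure
  -- constants
  set V : ℝ := (volume (cthickening 1 B)).toReal + 1 with hV
  have hV1 : 1 ≤ V := by
    have : 0 ≤ (volume (cthickening 1 B)).toReal := ENNReal.toReal_nonneg
    rw [hV]; linarith
  have hV0 : 0 < V := by linarith
  obtain ⟨C, hC⟩ := hBcl.exists_bound_of_continuousOn hf
  set Cf : ℝ := max C 0 with hCf
  have hCf0 : 0 ≤ Cf := le_max_right _ _
  have hCfb : ∀ y ∈ closure B, |f y| ≤ Cf := fun y hy => (hC y hy).trans (le_max_left _ _)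
  -- uniform continuity
  set ε₁ : ℝ := ε / (3 * V) with hε₁def
  have hε₁ : 0 < ε₁ := by positivity
  obtain ⟨δ₁, hδ₁0, hδ₁⟩ := (Metric.uniformContinuousOn_iff).1
    (hBcl.uniformContinuousOn_of_continuous hf) ε₁ hε₁
  -- boundary collar
  set ε₂ : ℝ := ε / (3 * (Cf + 1)) with hε₂def
  have hε₂ : 0 < ε₂ := by positivity
  obtain ⟨δ₂, hδ₂0, hδ₂1, hδ₂⟩ := Gset_small hB hBb hfr hε₂
  refine ⟨min δ₁ δ₂, lt_min hδ₁0 hδ₂0, fun h hh hhδ => ?_⟩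
  have hhδ₁ : h < δ₁ := hhδ.trans_le (min_le_left _ _)
  have hhδ₂ : h < δ₂ := hhδ.trans_le (min_le_right _ _)
  have hh1 : h ≤ 1 := (hhδ₂.trans_le hδ₂1).le
  -- the finite set of lattice points
  have Pfin : (B ∩ latticeSet d h).Finite := lattice_inter_finite hBb hh
  set P : Finset (Fin d → ℝ) := Pfin.toFinset with hP
  have hPmem : ∀ x ∈ P, x ∈ B ∩ latticeSet d h := fun x hx => Pfin.mem_toFinset.1 hx
  rw [finsum_mem_eq_finite_toFinset_sum _ Pfin]
  -- the union of cubes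
  set U : Set (Fin d → ℝ) := ⋃ x ∈ P, cube x h with hU
  have hUmeas : MeasurableSet U := P.measurableSet_biUnion fun x _ => cube_measurable x h
  -- integrability
  have hfint : IntegrableOn f (closure B) := hf.integrableOn_compact hBcl
  have hfintB : IntegrableOn f B := hfint.mono_set subset_closure
  -- split the integral
  have hsplit : (∫ x in B ∩ U, f x) + ∫ x in B \ U, f x = ∫ x in B, f x :=
    integral_inter_add_diff hUmeas hfintB
  -- the inner part as a sum over cubes
  have hBU : B ∩ U = ⋃ x ∈ P, (B ∩ cube x h) := by
    rw [hU, Set.inter_iUnion₂]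
  have hinner : ∫ x in B ∩ U, f x = ∑ x ∈ P, ∫ y in B ∩ cube x h, f y := by
    rw [hBU]
    exact integral_biUnion_finset P (fun x _ => hB.inter (cube_measurable x h))
      (fun x hx y hy hxy => (cube_disjoint hh (hPmem x hx).2 (hPmem y hy).2 hxy).mono
        inter_subset_right inter_subset_right)
      (fun x _ => hfintB.mono_set inter_subset_left)
  -- finiteness facts
  have hcubefin : ∀ x : Fin d → ℝ, volume (cube x h) < ⊤ := fun x => by
    rw [cube_volume x hh.le]; exact ofReal_lt_top
  have hsfin : ∀ x : Fin d → ℝ, volume (B ∩ cube x h) < ⊤ := fun x =>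
    (measure_mono inter_subset_right).trans_lt (hcubefin x)
  have hGfin : volume (Gset B h) ≠ ⊤ := by
    have hsub : Gset B h ⊆ cthickening h B ∪ B :=
      Set.union_subset (fun y hy => Or.inl hy.1) (fun y hy => Or.inr hy.1)
    exact ((measure_mono hsub).trans_lt
      (measure_union_lt_top hBb.cthickening.measure_lt_top hBb.measure_lt_top)).ne
  set w : (Fin d → ℝ) → ℝ := fun x => (volume (cube x h \ B)).toReal with hwdef
  have hw0 : ∀ x, 0 ≤ w x := fun x => ENNReal.toReal_nonneg
  set g : ℝ := (volume (Gset B h)).toReal with hgdef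
  have hg0 : 0 ≤ g := ENNReal.toReal_nonneg
  have hgε : g < ε₂ := hδ₂ h hh hhδ₂
  -- cube volume decomposition
  have key2 : ∀ x : Fin d → ℝ, (volume (B ∩ cube x h)).toReal + w x = h ^ d := by
    intro x
    have hmi := measure_inter_add_diff (μ := volume) (cube x h) hB
    rw [Set.inter_comm] at hmi
    rw [hwdef]
    rw [← ENNReal.toReal_add (hsfin x).ne
      (((measure_mono Set.diff_subset).trans_lt (hcubefin x)).ne), hmi,
      cube_volume x hh.le, ENNReal.toReal_ofReal (by positivity)]
  -- per-cube integral estimate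
  have key1 : ∀ x ∈ P, |(∫ y in B ∩ cube x h, f y) -
      f x * (volume (B ∩ cube x h)).toReal| ≤ ε₁ * (volume (B ∩ cube x h)).toReal := by
    intro x hx
    have hint_s : IntegrableOn f (B ∩ cube x h) := hfintB.mono_set inter_subset_left
    have hconst : IntegrableOn (fun _ => f x) (B ∩ cube x h) :=
      integrableOn_const (hsfin x).ne
    have hbound : ∀ y ∈ B ∩ cube x h, ‖f y - f x‖ ≤ ε₁ := by
      intro y hy
      have hyK : y ∈ closure B := subset_closure hy.1
      have hxK : (x : Fin d → ℝ) ∈ closure B := subset_closure (hPmem x hx).1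
      have hd : dist y x < δ₁ := (dist_le_of_mem_cube hh.le hy.2).trans_lt hhδ₁
      have := hδ₁ y hyK x hxK hd
      rw [show ‖f y - f x‖ = dist (f y) (f x) from (dist_eq_norm _ _).symm]
      exact this.le
    have hnorm := norm_setIntegral_le_of_norm_le_const (μ := volume) (hsfin x) hbound
    have hsub : ∫ y in B ∩ cube x h, (f y - f x) =
        (∫ y in B ∩ cube x h, f y) - f x * (volume (B ∩ cube x h)).toReal := by
      rw [integral_sub hint_s hconst, setIntegral_const, smul_eq_mul, measureReal_def]
      ring
    rw [hsub, Real.norm_eq_abs] at hnorm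
    exact hnorm
  -- per-cube full estimate
  have key3 : ∀ x ∈ P, |h ^ d * f x - ∫ y in B ∩ cube x h, f y| ≤
      ε₁ * h ^ d + Cf * w x := by
    intro x hx
    have k1 := key1 x hx
    have k2 := key2 x
    have hfx : |f x| ≤ Cf := hCfb x (subset_closure (hPmem x hx).1)
    set vx : ℝ := (volume (B ∩ cube x h)).toReal with hvx
    have hv0 : 0 ≤ vx := ENNReal.toReal_nonneg
    have habs1 : |h ^ d * f x - f x * vx| ≤ Cf * w x := by
      have : h ^ d * f x - f x * vx = f x * w x := by rw [← k2]; ring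
      rw [this, abs_mul, abs_of_nonneg (hw0 x)]
      exact mul_le_mul_of_nonneg_right hfx (hw0 x)
    calc |h ^ d * f x - ∫ y in B ∩ cube x h, f y|
        ≤ |h ^ d * f x - f x * vx| + |f x * vx - ∫ y in B ∩ cube x h, f y| :=
          abs_sub_le _ _ _
      _ ≤ Cf * w x + ε₁ * vx := by
          refine add_le_add habs1 ?_
          rw [abs_sub_comm]
          exact k1
      _ ≤ ε₁ * h ^ d + Cf * w x := by
          have hvle : vx ≤ h ^ d := by linarith [hw0 x]
          have := mul_le_mul_of_nonneg_left hvle hε₁.le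
          linarith
  -- sum of the w's
  have hwsum : ∑ x ∈ P, w x ≤ g := by
    have hdisj : (↑P : Set (Fin d → ℝ)).Pairwise (Function.onFun Disjoint fun x => cube x h \ B) := by
      intro x hx y hy hxy
      exact (cube_disjoint hh (hPmem x (Finset.mem_coe.1 hx)).2
        (hPmem y (Finset.mem_coe.1 hy)).2 hxy).mono Set.diff_subset Set.diff_subset
    have hmeas : ∀ x ∈ P, MeasurableSet (cube x h \ B) :=
      fun x _ => (cube_measurable x h).diff hB
    have hunion := measure_biUnion_finset (μ := volume) hdisj hmeas
    have hsub : (⋃ x ∈ P, (cube x h \ B)) ⊆ Gset B h := by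
      intro y hy
      simp only [Set.mem_iUnion] at hy
      obtain ⟨x, hx, hyx⟩ := hy
      exact Or.inl ⟨mem_cthickening_of_dist_le y x h B (hPmem x hx).1
        (dist_le_of_mem_cube hh.le hyx.1), hyx.2⟩
    calc ∑ x ∈ P, w x = (∑ x ∈ P, volume (cube x h \ B)).toReal := by
          rw [ENNReal.toReal_sum fun x _ =>
            ((measure_mono Set.diff_subset).trans_lt (hcubefin x)).ne]
      _ = (volume (⋃ x ∈ P, (cube x h \ B))).toReal := by rw [hunion]
      _ ≤ g := ENNReal.toReal_mono hGfin (measure_mono hsub)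
  -- the tail estimate
  have htailsub : B \ U ⊆ Gset B h := by
    intro y hy
    obtain ⟨x₀, hx₀lat, hx₀cube⟩ := exists_lattice_cube_mem y hh
    have hx₀B : x₀ ∉ B := by
      intro hmem
      exact hy.2 (Set.mem_biUnion (Pfin.mem_toFinset.2 ⟨hmem, hx₀lat⟩) hx₀cube)
    exact Or.inr ⟨hy.1, mem_cthickening_of_dist_le y x₀ h Bᶜ hx₀B
      (dist_le_of_mem_cube hh.le hx₀cube)⟩
  have htail : |∫ y in B \ U, f y| ≤ Cf * g := by
    have hBUfin : volume (B \ U) < ⊤ :=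
      (measure_mono (Set.diff_subset (s := B) (t := U))).trans_lt hBb.measure_lt_top
    have hnorm := norm_setIntegral_le_of_norm_le_const (μ := volume) hBUfin
      (C := Cf) (fun y hy => by
        rw [Real.norm_eq_abs]; exact hCfb y (subset_closure hy.1))
    rw [Real.norm_eq_abs] at hnorm
    refine hnorm.trans (mul_le_mul_of_nonneg_left ?_ hCf0)
    exact ENNReal.toReal_mono hGfin (measure_mono htailsub)
  -- count bound
  have hcount : h ^ d * P.card ≤ V - 1 := by
    have := count_bound hBb hh hh1 P hPmem
    rw [hV]; linarith
  -- assembly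
  have hrw : h ^ d * ∑ x ∈ P, f x - ∫ x in B, f x =
      ∑ x ∈ P, (h ^ d * f x - ∫ y in B ∩ cube x h, f y) - ∫ y in B \ U, f y := by
    rw [← hsplit, hinner, Finset.sum_sub_distrib, Finset.mul_sum]
    ring
  rw [hrw]
  have hstep1 : |∑ x ∈ P, (h ^ d * f x - ∫ y in B ∩ cube x h, f y) - ∫ y in B \ U, f y| ≤
      ∑ x ∈ P, |h ^ d * f x - ∫ y in B ∩ cube x h, f y| + |∫ y in B \ U, f y| := by
    refine (abs_sub _ _).trans (add_le_add (Finset.abs_sum_le_sum_abs _ _) le_rfl)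
  have hstep2 : ∑ x ∈ P, |h ^ d * f x - ∫ y in B ∩ cube x h, f y| ≤
      ε₁ * (h ^ d * P.card) + Cf * g := by
    calc ∑ x ∈ P, |h ^ d * f x - ∫ y in B ∩ cube x h, f y|
        ≤ ∑ x ∈ P, (ε₁ * h ^ d + Cf * w x) := Finset.sum_le_sum key3
      _ = P.card * (ε₁ * h ^ d) + Cf * ∑ x ∈ P, w x := by
          rw [Finset.sum_add_distrib, Finset.sum_const, Finset.mul_sum]
          ring_nf
      _ ≤ ε₁ * (h ^ d * P.card) + Cf * g := by
          have := mul_le_mul_of_nonneg_left hwsum hCf0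
          nlinarith []
  have hfinal : ε₁ * (h ^ d * P.card) + Cf * g + Cf * g < ε := by
    have h1 : ε₁ * (h ^ d * P.card) ≤ ε₁ * (V - 1) :=
      mul_le_mul_of_nonneg_left hcount hε₁.le
    have h2 : Cf * g ≤ Cf * ε₂ := mul_le_mul_of_nonneg_left hgε.le hCf0
    have h3 : ε₁ * (V - 1) < ε / 3 := by
      have hlt : ε₁ * (V - 1) < ε₁ * V := by nlinarith
      have heq : ε₁ * V = ε / 3 := by
        rw [hε₁def]; field_simp
      linarith
    have h4 : Cf * ε₂ ≤ ε / 3 := by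
      have heq : (Cf + 1) * ε₂ = ε / 3 := by
        rw [hε₂def]; field_simp
      nlinarith
    have hA : ε₁ * (h ^ d * (P.card : ℝ)) < ε / 3 := lt_of_le_of_lt h1 h3
    have hB2 : Cf * g ≤ ε / 3 := h2.trans h4
    linarith
  calc |∑ x ∈ P, (h ^ d * f x - ∫ y in B ∩ cube x h, f y) - ∫ y in B \ U, f y|
      ≤ ∑ x ∈ P, |h ^ d * f x - ∫ y in B ∩ cube x h, f y| + |∫ y in B \ U, f y| := hstep1
    _ ≤ (ε₁ * (h ^ d * P.card) + Cf * g) + Cf * g := add_le_add hstep2 htail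
    _ < ε := by linarith [hfinal]

end MA

open MA

/-- Let Ω ⊆ ℝ^d be open, bounded and convex, and let v be C² on an
open neighborhood of the closure of Ω and convex on Ω.  Let M_h be a family of
discretizations which is consistent at v: whenever h_k → 0⁺ and x_k ∈ Ω_{h_k}
with x_k → x ∈ Ω, one has M_{h_k}[r_{h_k} v](x_k) → det D²v(x).  Then for every
Borel set B ⊆ Ω with compact closure contained in Ω and whose boundary has
Lebesgue measure zero, h^d ∑_{x ∈ B ∩ Ω_h} M_h[r_h v](x) → ∫_B det D²v(x) dx
as h → 0⁺. -/
theorem discrete_MA_measures_converge (d : ℕ) (Ω : Set (Fin d → ℝ))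
    (hΩopen : IsOpen Ω) (hΩbdd : Bornology.IsBounded Ω) (hΩconv : Convex ℝ Ω)
    (v : (Fin d → ℝ) → ℝ)
    (hvC2 : ∃ U : Set (Fin d → ℝ), IsOpen U ∧ closure Ω ⊆ U ∧ ContDiffOn ℝ 2 v U)
    (hvconv : ConvexOn ℝ Ω v)
    (M : ℝ → (Fin d → ℝ) → ℝ)
    (hconsist : ∀ hk : ℕ → ℝ, (∀ k, 0 < hk k) → Tendsto hk atTop (nhds 0) →
      ∀ (xk : ℕ → (Fin d → ℝ)) (x : Fin d → ℝ), x ∈ Ω →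
        (∀ k, xk k ∈ Ω ∩ latticeSet d (hk k)) → Tendsto xk atTop (nhds x) →
        Tendsto (fun k => M (hk k) (xk k)) atTop (nhds (hessDet d v x)))
    (B : Set (Fin d → ℝ)) (hBmeas : MeasurableSet B) (hBΩ : B ⊆ Ω)
    (hBcl : IsCompact (closure B)) (hBclΩ : closure B ⊆ Ω)
    (hBfr : volume (frontier B) = 0) :
    Tendsto (fun h : ℝ => h ^ d * ∑ᶠ x ∈ B ∩ (Ω ∩ latticeSet d h), M h x)
      (nhdsWithin 0 (Set.Ioi 0)) (nhds (∫ x in B, hessDet d v x)) := by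
  obtain ⟨U, hUopen, hclU, hvU⟩ := hvC2
  set f : (Fin d → ℝ) → ℝ := hessDet d v with hfdef
  have hΩU : Ω ⊆ U := (subset_closure.trans hclU)
  have hfΩ : ContinuousOn f Ω := (hessDet_continuousOn hUopen hvU).mono hΩU
  have hfK : ContinuousOn f (closure B) := hfΩ.mono hBclΩ
  have hBb : Bornology.IsBounded B := hBcl.isBounded.subset subset_closure
  have hset : ∀ h : ℝ, B ∩ (Ω ∩ latticeSet d h) = B ∩ latticeSet d h := fun h => by
    rw [← Set.inter_assoc, Set.inter_eq_self_of_subset_left hBΩ]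
  set Vc : ℝ := (volume (cthickening 1 B)).toReal with hVc
  have hVc0 : 0 ≤ Vc := ENNReal.toReal_nonneg
  rw [Metric.tendsto_nhdsWithin_nhds]
  intro ε hε
  obtain ⟨δr, hδr0, hδr⟩ := riemann_sum_est hBmeas hBcl hBfr f hfK (half_pos hε)
  have hεu : 0 < ε / (2 * (Vc + 1)) := by positivity
  obtain ⟨δu, hδu0, hδu⟩ := unif_consist f hfΩ M hconsist hBΩ hBcl hBclΩ hεu
  refine ⟨min (min δr δu) 1, by positivity, ?_⟩
  intro h hhs hhd
  have hh : 0 < h := hhs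
  rw [Real.dist_eq, sub_zero, abs_of_pos hh] at hhd
  have hhr : h < δr := hhd.trans_le ((min_le_left _ _).trans (min_le_left _ _))
  have hhu : h < δu := hhd.trans_le ((min_le_left _ _).trans (min_le_right _ _))
  have hh1 : h ≤ 1 := (hhd.trans_le (min_le_right _ _)).le
  rw [Real.dist_eq, hset h]
  have Pfin : (B ∩ latticeSet d h).Finite := lattice_inter_finite hBb hh
  set P : Finset (Fin d → ℝ) := Pfin.toFinset with hP
  have hPmem : ∀ x ∈ P, x ∈ B ∩ latticeSet d h := fun x hx => Pfin.mem_toFinset.1 hx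
  have hTr : |h ^ d * ∑ᶠ x ∈ B ∩ latticeSet d h, f x - ∫ x in B, f x| < ε / 2 :=
    hδr h hh hhr
  have hMrw : (∑ᶠ x ∈ B ∩ latticeSet d h, M h x) = ∑ x ∈ P, M h x :=
    finsum_mem_eq_finite_toFinset_sum _ Pfin
  have hfrw : (∑ᶠ x ∈ B ∩ latticeSet d h, f x) = ∑ x ∈ P, f x :=
    finsum_mem_eq_finite_toFinset_sum _ Pfin
  have hcount : h ^ d * P.card ≤ Vc := count_bound hBb hh hh1 P hPmem
  have hST : |h ^ d * ∑ x ∈ P, M h x - h ^ d * ∑ x ∈ P, f x| < ε / 2 := by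
    have hsum : |∑ x ∈ P, M h x - ∑ x ∈ P, f x| ≤ P.card * (ε / (2 * (Vc + 1))) := by
      rw [← Finset.sum_sub_distrib]
      refine (Finset.abs_sum_le_sum_abs _ _).trans ?_
      calc ∑ x ∈ P, |M h x - f x| ≤ ∑ _x ∈ P, (ε / (2 * (Vc + 1))) :=
            Finset.sum_le_sum fun x hx => hδu h hh hhu x (hPmem x hx)
        _ = P.card * (ε / (2 * (Vc + 1))) := by
            rw [Finset.sum_const, nsmul_eq_mul]
    have hhd0 : (0:ℝ) < h ^ d := by positivity
    calc |h ^ d * ∑ x ∈ P, M h x - h ^ d * ∑ x ∈ P, f x|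
        = h ^ d * |∑ x ∈ P, M h x - ∑ x ∈ P, f x| := by
          rw [← mul_sub, abs_mul, abs_of_pos hhd0]
      _ ≤ h ^ d * (P.card * (ε / (2 * (Vc + 1)))) :=
          mul_le_mul_of_nonneg_left hsum hhd0.le
      _ = (h ^ d * P.card) * (ε / (2 * (Vc + 1))) := by ring
      _ ≤ Vc * (ε / (2 * (Vc + 1))) := mul_le_mul_of_nonneg_right hcount hεu.le
      _ < ε / 2 := by
          rw [show ε / 2 = (Vc + 1) * (ε / (2 * (Vc + 1))) by field_simp]
          exact mul_lt_mul_of_pos_right (by linarith) hεu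
  calc |h ^ d * ∑ᶠ x ∈ B ∩ latticeSet d h, M h x - ∫ x in B, f x|
      ≤ |h ^ d * ∑ᶠ x ∈ B ∩ latticeSet d h, M h x -
          h ^ d * ∑ᶠ x ∈ B ∩ latticeSet d h, f x| +
        |h ^ d * ∑ᶠ x ∈ B ∩ latticeSet d h, f x - ∫ x in B, f x| := abs_sub_le _ _ _
    _ < ε / 2 + ε / 2 := by
        rw [hMrw, hfrw]
        rw [hfrw] at hTr
        exact add_lt_add hST hTr
    _ = ε := add_halves ε
end

section
/- Let Ω ⊆ ℝ^d be open and convex, let (h_k) be a sequence of positive mesh sizes with h_k → 0, and for each k let v_k : ℝ^d → ℝ be a function whose restriction to the lattice h_kℤ^d is discrete convex on Ω, i.e., for every x ∈ Ω ∩ h_kℤ^d and every e ∈ h_kℤ^d with x + e ∈ Ω ∩ h_kℤ^d and x − e ∈ Ω ∩ h_kℤ^d, one has v_k(x + e) − 2 v_k(x) + v_k(x − e) ≥ 0. Let v : Ω → ℝ be continuous and suppose v_k converges to v uniformly on compact subsets of Ω in the mesh sense: for every compact K ⊆ Ω, max_{x ∈ K ∩ h_kℤ^d} |v_k(x) − v(x)|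 → 0 as k → ∞. Then v is convex on Ω. -/
open Filter

/-- Let Ω ⊆ ℝ^d be open and convex, h_k → 0 a sequence of positive
mesh sizes, and v_k functions whose restrictions to the lattices h_kℤ^d are
discrete convex on Ω.  If v_k converges uniformly on compact subsets of Ω, in
the mesh sense, to a continuous function v : Ω → ℝ, then v is convex on Ω. -/
theorem limit_of_discrete_convex_is_convex (d : ℕ) (Ω : Set (Fin d → ℝ))
    (hΩopen : IsOpen Ω) (hΩconv : Convex ℝ Ω)
    (h : ℕ → ℝ) (hpos : ∀ k, 0 < h k) (hto0 : Tendsto h atTop (nhds 0))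
    (vk : ℕ → (Fin d → ℝ) → ℝ)
    (hdc : ∀ k, ∀ x ∈ Ω ∩ latticeSet d (h k), ∀ e ∈ latticeSet d (h k),
      x + e ∈ Ω ∩ latticeSet d (h k) → x - e ∈ Ω ∩ latticeSet d (h k) →
      0 ≤ vk k (x + e) - 2 * vk k x + vk k (x - e))
    (v : (Fin d → ℝ) → ℝ) (hvcont : ContinuousOn v Ω)
    (hconv : ∀ K : Set (Fin d → ℝ), K ⊆ Ω → IsCompact K →
      ∀ ε : ℝ, 0 < ε → ∃ N : ℕ, ∀ k, N ≤ k →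
        ∀ x ∈ K ∩ latticeSet d (h k), |vk k x - v x| < ε) :
    ConvexOn ℝ Ω v := by
  classical
  -- rounding to the lattice
  set R : ℝ → (Fin d → ℝ) → (Fin d → ℝ) :=
    fun hh z => fun i => ((round (z i / hh) : ℤ) : ℝ) * hh with hRdef
  have hRlat : ∀ hh z, R hh z ∈ latticeSet d hh := fun hh z =>
    ⟨fun i => round (z i / hh), rfl⟩
  have hRdist : ∀ hh z, 0 < hh → dist (R hh z) z ≤ hh / 2 := by
    intro hh z hhh
    rw [dist_pi_le_iff (by positivity)]
    intro i
    have h1 : R hh z i - z i = -((z i / hh - round (z i / hh)) * hh) := by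
      simp only [hRdef]
      field_simp
      ring
    rw [Real.dist_eq, h1, abs_neg, abs_mul, abs_of_pos hhh]
    have h2 : |z i / hh - (round (z i / hh) : ℝ)| ≤ 1 / 2 := abs_sub_round _
    nlinarith
  -- lattice closed under + and -
  have hlatAdd : ∀ (hh : ℝ), ∀ x ∈ latticeSet d hh, ∀ y ∈ latticeSet d hh,
      x + y ∈ latticeSet d hh := by
    rintro hh x ⟨mx, rfl⟩ y ⟨my, rfl⟩
    exact ⟨mx + my, by funext i; simp [Pi.add_apply]; push_cast; ring⟩
  have hlatSub : ∀ (hh : ℝ), ∀ x ∈ latticeSet d hh, ∀ y ∈ latticeSet d hh,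
      x - y ∈ latticeSet d hh := by
    rintro hh x ⟨mx, rfl⟩ y ⟨my, rfl⟩
    exact ⟨mx - my, by funext i; simp [Pi.sub_apply]; push_cast; ring⟩
  -- midpoint convexity of v on Ω
  have hmid : ∀ a ∈ Ω, ∀ b ∈ Ω,
      v ((1/2 : ℝ) • a + (1/2 : ℝ) • b) ≤ (v a + v b) / 2 := by
    intro a ha b hb
    set m : Fin d → ℝ := (1/2 : ℝ) • a + (1/2 : ℝ) • b with hmdef
    have hm : m ∈ Ω := hΩconv ha hb (by norm_num) (by norm_num) (by norm_num)
    obtain ⟨εa, hεa, hba⟩ := Metric.isOpen_iff.mp hΩopen a ha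
    obtain ⟨εb, hεb, hbb⟩ := Metric.isOpen_iff.mp hΩopen b hb
    obtain ⟨εm, hεm, hbm⟩ := Metric.isOpen_iff.mp hΩopen m hm
    set ε : ℝ := min εa (min εb εm) with hεdef
    have hε : 0 < ε := lt_min hεa (lt_min hεb hεm)
    set K : Set (Fin d → ℝ) :=
      Metric.closedBall a (ε/2) ∪ (Metric.closedBall b (ε/2) ∪ Metric.closedBall m (ε/2))
      with hKdef
    have hKΩ : K ⊆ Ω := by
      rintro z (hz | hz | hz)
      · exact hba (lt_of_le_of_lt (Metric.mem_closedBall.mp hz) (by linarith [min_le_left εa (min εb εm)]))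
      · exact hbb (lt_of_le_of_lt (Metric.mem_closedBall.mp hz)
          (by linarith [min_le_right εa (min εb εm), min_le_left εb εm]))
      · exact hbm (lt_of_le_of_lt (Metric.mem_closedBall.mp hz)
          (by linarith [min_le_right εa (min εb εm), min_le_right εb εm]))
    have hKc : IsCompact K :=
      ((isCompact_closedBall _ _).union ((isCompact_closedBall _ _).union
        (isCompact_closedBall _ _)))
    set c : Fin d → ℝ := (1/2 : ℝ) • (b - a) with hcdef
    have hmc_b : m + c = b := by
      simp only [hmdef, hcdef]; module
    have hmc_a : m - c = a := by
      simp only [hmdef, hcdef]; module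
    set x : ℕ → Fin d → ℝ := fun k => R (h k) m with hxdef
    set e : ℕ → Fin d → ℝ := fun k => R (h k) c with hedef
    have hxm : ∀ k, dist (x k) m ≤ h k / 2 := fun k => hRdist _ _ (hpos k)
    have hec : ∀ k, dist (e k) c ≤ h k / 2 := fun k => hRdist _ _ (hpos k)
    have hxb : ∀ k, dist (x k + e k) b ≤ h k := by
      intro k
      calc dist (x k + e k) b = dist (x k + e k) (m + c) := by rw [hmc_b]
        _ ≤ dist (x k) m + dist (e k) c := dist_add_add_le _ _ _ _
        _ ≤ h k := by linarith [hxm k, hec k]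
    have hxa : ∀ k, dist (x k - e k) a ≤ h k := by
      intro k
      calc dist (x k - e k) a = dist (x k - e k) (m - c) := by rw [hmc_a]
        _ ≤ dist (x k) m + dist (e k) c := dist_sub_sub_le _ _ _ _
        _ ≤ h k := by linarith [hxm k, hec k]
    have hev : ∀ᶠ k in atTop, h k < ε / 2 :=
      hto0.eventually (gt_mem_nhds (by positivity))
    have hmemx : ∀ᶠ k in atTop, x k ∈ K ∩ latticeSet d (h k) := by
      filter_upwards [hev] with k hk
      refine ⟨Or.inr (Or.inr (Metric.mem_closedBall.mpr ?_)), hRlat _ _⟩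
      have := hxm k; have := (hpos k).le; linarith
    have hmemxb : ∀ᶠ k in atTop, x k + e k ∈ K ∩ latticeSet d (h k) := by
      filter_upwards [hev] with k hk
      refine ⟨Or.inr (Or.inl (Metric.mem_closedBall.mpr ?_)),
        hlatAdd _ _ (hRlat _ _) _ (hRlat _ _)⟩
      have := hxb k; linarith
    have hmemxa : ∀ᶠ k in atTop, x k - e k ∈ K ∩ latticeSet d (h k) := by
      filter_upwards [hev] with k hk
      refine ⟨Or.inl (Metric.mem_closedBall.mpr ?_),
        hlatSub _ _ (hRlat _ _) _ (hRlat _ _)⟩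
      have := hxa k; linarith
    -- convergence of the relevant values
    have keyT : ∀ (p : ℕ → Fin d → ℝ) (z : Fin d → ℝ), z ∈ Ω →
        (∀ᶠ k in atTop, p k ∈ K ∩ latticeSet d (h k)) →
        (∀ k, dist (p k) z ≤ h k) →
        Tendsto (fun k => vk k (p k)) atTop (nhds (v z)) := by
      intro p z hz hmem hdist
      have hp : Tendsto p atTop (nhds z) := by
        rw [tendsto_iff_dist_tendsto_zero]
        exact squeeze_zero (fun k => dist_nonneg) hdist (by simpa using hto0)
      have hv : Tendsto (fun k => v (p k)) atTop (nhds (v z)) :=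
        ((hvcont.continuousAt (hΩopen.mem_nhds hz)).tendsto).comp hp
      have hdiff : Tendsto (fun k => vk k (p k) - v (p k)) atTop (nhds 0) := by
        rw [Metric.tendsto_atTop]
        intro δ hδ
        obtain ⟨N1, hN1⟩ := hconv K hKΩ hKc δ hδ
        obtain ⟨N2, hN2⟩ := eventually_atTop.mp hmem
        refine ⟨max N1 N2, fun k hk => ?_⟩
        rw [Real.dist_eq, sub_zero]
        exact hN1 k (le_trans (le_max_left _ _) hk) _ (hN2 k (le_trans (le_max_right _ _) hk))
      have := hdiff.add hv
      simpa using this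
    have hA : Tendsto (fun k => vk k (x k - e k)) atTop (nhds (v a)) :=
      keyT _ a ha hmemxa hxa
    have hB : Tendsto (fun k => vk k (x k + e k)) atTop (nhds (v b)) :=
      keyT _ b hb hmemxb hxb
    have hM : Tendsto (fun k => vk k (x k)) atTop (nhds (v m)) :=
      keyT _ m hm hmemx (fun k => le_trans (hxm k) (by linarith [(hpos k).le]))
    have hlim : Tendsto (fun k => vk k (x k + e k) - 2 * vk k (x k) + vk k (x k - e k))
        atTop (nhds (v b - 2 * v m + v a)) :=
      (hB.sub (hM.const_mul 2)).add hA
    have hin : ∀ᶠ k in atTop,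
        0 ≤ vk k (x k + e k) - 2 * vk k (x k) + vk k (x k - e k) := by
      filter_upwards [hmemx, hmemxb, hmemxa] with k h1 h2 h3
      exact hdc k (x k) ⟨hKΩ h1.1, h1.2⟩ (e k) (hRlat _ _) ⟨hKΩ h2.1, h2.2⟩ ⟨hKΩ h3.1, h3.2⟩
    have h0 : 0 ≤ v b - 2 * v m + v a := ge_of_tendsto hlim hin
    linarith
  -- dyadic convexity
  have hdy : ∀ n : ℕ, ∀ j : ℕ, j ≤ 2^n → ∀ a ∈ Ω, ∀ b ∈ Ω,
      v (((j : ℝ)/2^n) • a + (1 - (j : ℝ)/2^n) • b) ≤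
        ((j : ℝ)/2^n) * v a + (1 - (j : ℝ)/2^n) * v b := by
    intro n
    induction n with
    | zero =>
      intro j hj a ha b hb
      interval_cases j
      · norm_num
      · norm_num
    | succ n ih =>
      intro j hj a ha b hb
      rcases le_or_gt j (2^n) with hle | hgt
      · set t : ℝ := (j : ℝ)/2^n with htdef
        have ht0 : 0 ≤ t := by positivity
        have ht1 : t ≤ 1 := by
          rw [htdef, div_le_one (by positivity)]
          exact_mod_cast Nat.cast_le.mpr hle |>.trans_eq (by push_cast; ring)
        set u : Fin d → ℝ := t • a + (1 - t) • b with hudef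
        have hu : u ∈ Ω := hΩconv ha hb ht0 (by linarith) (by ring)
        have h1 := hmid u hu b hb
        have h2 := ih j hle a ha b hb
        have hhalf : (j : ℝ)/2^(n+1) = t/2 := by
          rw [htdef, pow_succ]; ring
        rw [hhalf]
        have hpt : (t/2) • a + (1 - t/2) • b = (1/2 : ℝ) • u + (1/2 : ℝ) • b := by
          rw [hudef]; module
        rw [hpt]
        rw [← htdef] at h2
        linarith
      · set i : ℕ := j - 2^n with hidef
        have hicast : (i : ℝ) = (j : ℝ) - 2^n := by
          rw [hidef, Nat.cast_sub hgt.le]; push_cast; ring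
        have hile : i ≤ 2^n := by
          have : 2^(n+1) = 2^n + 2^n := by ring
          omega
        set t : ℝ := (i : ℝ)/2^n with htdef
        have ht0 : 0 ≤ t := by positivity
        have ht1 : t ≤ 1 := by
          rw [htdef, div_le_one (by positivity)]
          exact_mod_cast Nat.cast_le.mpr hile |>.trans_eq (by push_cast; ring)
        set u : Fin d → ℝ := t • a + (1 - t) • b with hudef
        have hu : u ∈ Ω := hΩconv ha hb ht0 (by linarith) (by ring)
        have h1 := hmid a ha u hu
        have h2 := ih i hile a ha b hb
        have hs : (j : ℝ)/2^(n+1) = 1/2 + t/2 := by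
          rw [htdef, hicast, pow_succ]
          field_simp
          ring
        rw [hs]
        have hpt : (1/2 + t/2) • a + (1 - (1/2 + t/2)) • b
            = (1/2 : ℝ) • a + (1/2 : ℝ) • u := by
          rw [hudef]; module
        rw [hpt]
        rw [← htdef] at h2
        linarith
  -- pass to the limit along dyadic rationals
  refine ⟨hΩconv, ?_⟩
  intro x hx y hy s t hs ht hst
  have hs1 : s ≤ 1 := by linarith
  set jn : ℕ → ℕ := fun n => ⌊s * 2^n⌋₊ with hjndef
  set tn : ℕ → ℝ := fun n => (jn n : ℝ)/2^n with htndef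
  have hjle : ∀ n, jn n ≤ 2^n := by
    intro n
    have h1 : s * 2^n ≤ ((2^n : ℕ) : ℝ) := by
      push_cast
      nlinarith [pow_pos (by norm_num : (0:ℝ) < 2) n]
    calc jn n ≤ ⌊((2^n : ℕ) : ℝ)⌋₊ := Nat.floor_le_floor h1
      _ = 2^n := Nat.floor_natCast _
  have htnle : ∀ n, tn n ≤ s := by
    intro n
    have h1 : (jn n : ℝ) ≤ s * 2^n := Nat.floor_le (by positivity)
    rw [htndef]
    rw [div_le_iff₀ (by positivity)]
    linarith
  have htngt : ∀ n, s - tn n ≤ (1/2 : ℝ)^n := by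
    intro n
    have h1 : s * 2^n < (jn n : ℝ) + 1 := Nat.lt_floor_add_one _
    have h2 : (0:ℝ) < 2^n := by positivity
    have h3 : (1/2 : ℝ)^n = 1/2^n := by rw [div_pow, one_pow]
    have h4 : s ≤ ((jn n : ℝ) + 1)/2^n := by rw [le_div_iff₀ h2]; linarith
    have h5 : ((jn n : ℝ) + 1)/2^n = (jn n : ℝ)/2^n + 1/2^n := add_div _ _ _
    rw [htndef, h3]
    simp only []
    linarith
  have htns : Tendsto tn atTop (nhds s) := by
    have h1 : Tendsto (fun n => s - tn n) atTop (nhds 0) :=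
      squeeze_zero (fun n => by linarith [htnle n]) htngt
        (tendsto_pow_atTop_nhds_zero_of_lt_one (by norm_num) (by norm_num))
    have h2 : Tendsto (fun n => s - (s - tn n)) atTop (nhds (s - 0)) :=
      Tendsto.sub tendsto_const_nhds h1
    simpa using h2
  set c : ℝ → Fin d → ℝ := fun r => r • x + (1 - r) • y with hcdef
  have hc : Continuous c := by
    apply Continuous.add
    · exact continuous_id.smul continuous_const
    · exact (continuous_const.sub continuous_id).smul continuous_const
  have hcs : c s ∈ Ω := hΩconv hx hy hs (by linarith) (by ring)
  have hL : Tendsto (fun n => v (c (tn n))) atTop (nhds (v (c s))) :=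
    ((hvcont.continuousAt (hΩopen.mem_nhds hcs)).tendsto).comp
      ((hc.tendsto s).comp htns)
  have hR2 : Tendsto (fun n => tn n * v x + (1 - tn n) * v y) atTop
      (nhds (s * v x + (1 - s) * v y)) := by
    exact (htns.mul tendsto_const_nhds).add
      ((tendsto_const_nhds.sub htns).mul tendsto_const_nhds)
  have hineq : ∀ n, v (c (tn n)) ≤ tn n * v x + (1 - tn n) * v y := by
    intro n
    have := hdy n (jn n) (hjle n) x hx y hy
    simpa [hcdef, htndef] using this
  have hfin : v (c s) ≤ s * v x + (1 - s) * v y :=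
    le_of_tendsto_of_tendsto' hL hR2 hineq
  have hts : (1 : ℝ) - s = t := by linarith
  rw [hts] at hfin
  simpa [hcdef, hts] using hfin
end
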